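/- Let α < β be reals, let b > 0 and C ≥ 0, and let f : ℝ → ℝ be continuous on [α, β] with f(α) = 0 and f(r) ≥ 0 for all r ∈ [α, β]. Define E : ℝ → ℝ by E(x) = exp(−b/x) if x > 0 and E(x) = 0 if x ≤ 0. Suppose that for every r ∈ [α, β], f(r)² ≤ C · ∫_α^r ( ∫_α^t E(f(τ)) dτ ) dt. Then f(r) = 0 for all r ∈ [α, β]. -/

import Mathlib

open MeasureTheory Set

private lemma cube_div_le_exp {x : ℝ} (hx : 0 ≤ x) : (x / 3) ^ 3 ≤ Real.exp x := by
  have h1 : x / 3 + 1 ≤ Real.exp (x / 3) := Real.add_one_le_exp _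
  have h2 : Real.exp x = (Real.exp (x / 3)) ^ 3 := by
    rw [← Real.exp_nat_mul]; norm_num; ring
  rw [h2]
  have h3 : (0:ℝ) ≤ x / 3 := by linarith
  calc (x / 3) ^ 3 ≤ (x / 3 + 1) ^ 3 := by
        apply pow_le_pow_left₀ h3 (by linarith)
    _ ≤ (Real.exp (x / 3)) ^ 3 := pow_le_pow_left₀ (by linarith) h1 3

/-- Osgood-type vanishing lemma: if a nonnegative continuous function `f` on
`[α, β]` vanishes at `α` and satisfies
`f(r)² ≤ C ∫_α^r ∫_α^t E(f(τ)) dτ dt`, where `E(x) = exp (-b/x)` for `x > 0`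
and `E(x) = 0` for `x ≤ 0` (with `b > 0`), then `f ≡ 0` on `[α, β]`. -/
theorem osgood_vanishing (α β b C : ℝ) (hαβ : α < β) (hb : 0 < b) (hC : 0 ≤ C)
    (f : ℝ → ℝ) (hf : ContinuousOn f (Set.Icc α β)) (hfα : f α = 0)
    (hf0 : ∀ r ∈ Set.Icc α β, 0 ≤ f r)
    (E : ℝ → ℝ) (hE : ∀ x : ℝ, E x = if 0 < x then Real.exp (-b / x) else 0)
    (hineq : ∀ r ∈ Set.Icc α β,
      (f r) ^ 2 ≤ C * ∫ t in α..r, (∫ τ in α..t, E (f τ))) :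
    ∀ r ∈ Set.Icc α β, f r = 0 := by
  by_contra hcon
  push_neg at hcon
  obtain ⟨r₀, hr₀, hfr₀⟩ := hcon
  have hM : 0 < f r₀ := lt_of_le_of_ne (hf0 r₀ hr₀) (Ne.symm hfr₀)
  have hβα : 0 < β - α := sub_pos.mpr hαβ
  have hD : 0 < 54 * (C + 1) * (β - α) ^ 2 := by positivity
  set v : ℝ := min (f r₀) (b ^ 3 / (54 * (C + 1) * (β - α) ^ 2)) with hvdef
  have hv0 : 0 < v := lt_min hM (by positivity)
  have hvM : v ≤ f r₀ := min_le_left _ _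
  have hvb : v * (54 * (C + 1) * (β - α) ^ 2) ≤ b ^ 3 := by
    have h := min_le_right (f r₀) (b ^ 3 / (54 * (C + 1) * (β - α) ^ 2))
    rw [← hvdef] at h
    exact (le_div_iff₀ hD).mp h
  -- basic facts about E
  have hE0 : ∀ x, 0 ≤ E x := by
    intro x; rw [hE x]; split
    · exact (Real.exp_pos _).le
    · exact le_refl 0
  have hE1 : ∀ x, E x ≤ 1 := by
    intro x; rw [hE x]; split
    · rename_i hx
      rw [show (1:ℝ) = Real.exp 0 by simp]
      apply Real.exp_le_exp.mpr
      have : 0 ≤ b / x := by positivity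
      rw [neg_div]; linarith
    · norm_num
  have hEmono : Monotone E := by
    intro x y hxy
    rw [hE x, hE y]
    by_cases hx : 0 < x
    · have hy : 0 < y := lt_of_lt_of_le hx hxy
      rw [if_pos hx, if_pos hy]
      apply Real.exp_le_exp.mpr
      rw [neg_div, neg_div, neg_le_neg_iff]
      exact div_le_div_of_nonneg_left hb.le hx hxy
    · rw [if_neg hx]; split
      · exact (Real.exp_pos _).le
      · exact le_refl 0
  have hEmeas : Measurable E := by
    have : E = fun x => if 0 < x then Real.exp (-b / x) else 0 := funext hE
    rw [this]
    exact Measurable.ite (measurableSet_lt measurable_const measurable_id)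
      (Real.measurable_exp.comp (measurable_const.div measurable_id)) measurable_const
  -- the first point where f = v
  have hαr₀ : α ≤ r₀ := hr₀.1
  have hTne : {r | r ∈ Set.Icc α r₀ ∧ f r = v}.Nonempty := by
    have hsub : Set.Icc (f α) (f r₀) ⊆ f '' Set.Icc α r₀ :=
      intermediate_value_Icc hαr₀ (hf.mono (Icc_subset_Icc le_rfl hr₀.2))
    have hvmem : v ∈ Set.Icc (f α) (f r₀) := by rw [hfα]; exact ⟨hv0.le, hvM⟩
    obtain ⟨x, hx, hfx⟩ := hsub hvmem
    exact ⟨x, hx, hfx⟩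
  have hTclosed : IsClosed {r | r ∈ Set.Icc α r₀ ∧ f r = v} := by
    have : {r | r ∈ Set.Icc α r₀ ∧ f r = v} = Set.Icc α r₀ ∩ f ⁻¹' {v} := by
      ext x; simp [Set.mem_preimage]
    rw [this]
    exact (hf.mono (Icc_subset_Icc le_rfl hr₀.2)).preimage_isClosed_of_isClosed
      isClosed_Icc isClosed_singleton
  have hTbdd : BddBelow {r | r ∈ Set.Icc α r₀ ∧ f r = v} := ⟨α, fun x hx => hx.1.1⟩
  set s : ℝ := sInf {r | r ∈ Set.Icc α r₀ ∧ f r = v} with hsdef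
  have hsmem : s ∈ {r | r ∈ Set.Icc α r₀ ∧ f r = v} := hTclosed.csInf_mem hTne hTbdd
  have hαs : α ≤ s := hsmem.1.1
  have hsβ : s ∈ Set.Icc α β := ⟨hαs, hsmem.1.2.trans hr₀.2⟩
  have hfs : f s = v := hsmem.2
  -- on [α, s], f ≤ v
  have hle : ∀ τ ∈ Set.Icc α s, f τ ≤ v := by
    intro τ hτ
    by_contra h
    push_neg at h
    have hτβ : τ ∈ Set.Icc α β := ⟨hτ.1, hτ.2.trans hsβ.2⟩
    have hsub : Set.Icc (f α) (f τ) ⊆ f '' Set.Icc α τ :=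
      intermediate_value_Icc hτ.1 (hf.mono (Icc_subset_Icc le_rfl hτβ.2))
    have hvmem : v ∈ Set.Icc (f α) (f τ) := by rw [hfα]; exact ⟨hv0.le, h.le⟩
    obtain ⟨σ, hσ, hfσ⟩ := hsub hvmem
    have hσT : σ ∈ {r | r ∈ Set.Icc α r₀ ∧ f r = v} :=
      ⟨⟨hσ.1, hσ.2.trans (hτ.2.trans hsmem.1.2)⟩, hfσ⟩
    have hsσ : s ≤ σ := csInf_le hTbdd hσT
    have hτs : τ = s := le_antisymm hτ.2 (hsσ.trans hσ.2)
    rw [hτs, hfs] at h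
    exact lt_irrefl v h
  -- integrability of g = E ∘ f
  set g : ℝ → ℝ := fun τ => E (f τ) with hgdef
  have hgint : ∀ t ∈ Set.Icc α β, IntervalIntegrable g volume α t := by
    intro t ht
    rw [intervalIntegrable_iff_integrableOn_Icc_of_le ht.1]
    have hfm : AEMeasurable f (volume.restrict (Set.Icc α t)) :=
      (hf.aemeasurable measurableSet_Icc).mono_measure
        (Measure.restrict_mono (Icc_subset_Icc le_rfl ht.2) le_rfl)
    have hgm : AEStronglyMeasurable g (volume.restrict (Set.Icc α t)) :=
      (hEmeas.comp_aemeasurable hfm).aestronglyMeasurable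
    have hconst : IntegrableOn (fun _ : ℝ => (1:ℝ)) (Set.Icc α t) volume :=
      integrableOn_const measure_Icc_lt_top.ne
    refine Integrable.mono' hconst hgm (ae_of_all _ fun τ => ?_)
    rw [Real.norm_eq_abs, abs_of_nonneg (hE0 _)]
    exact hE1 _
  -- the inner integral function F
  set F : ℝ → ℝ := fun t => ∫ τ in α..t, g τ with hFdef
  have hFmono : MonotoneOn F (Set.uIcc α s) := by
    rw [Set.uIcc_of_le hαs]
    intro x hx y hy hxy
    have hxβ : x ∈ Set.Icc α β := ⟨hx.1, hx.2.trans hsβ.2⟩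
    have h1 : IntervalIntegrable g volume α x := hgint x hxβ
    have h2 : IntervalIntegrable g volume x y := by
      refine (hgint s hsβ).mono_set ?_
      rw [Set.uIcc_of_le hαs, Set.uIcc_of_le hxy]
      exact Icc_subset_Icc hx.1 hy.2
    have hadd : F x + (∫ τ in x..y, g τ) = F y :=
      intervalIntegral.integral_add_adjacent_intervals h1 h2
    have hnn : 0 ≤ ∫ τ in x..y, g τ :=
      intervalIntegral.integral_nonneg hxy (fun u _ => hE0 _)
    linarith
  have hFint : IntervalIntegrable F volume α s := hFmono.intervalIntegrable
  -- pointwise bound F t ≤ (β - α) * E v on [α, s]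
  have hFle : ∀ t ∈ Set.Icc α s, F t ≤ (β - α) * E v := by
    intro t ht
    have htβ : t ∈ Set.Icc α β := ⟨ht.1, ht.2.trans hsβ.2⟩
    have h1 : F t ≤ ∫ _ in α..t, E v := by
      refine intervalIntegral.integral_mono_on ht.1 (hgint t htβ)
        intervalIntegrable_const (fun τ hτ => ?_)
      exact hEmono (hle τ ⟨hτ.1, hτ.2.trans ht.2⟩)
    rw [intervalIntegral.integral_const, smul_eq_mul] at h1
    have h2 : (t - α) * E v ≤ (β - α) * E v :=
      mul_le_mul_of_nonneg_right (by linarith [htβ.2]) (hE0 v)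
    linarith
  -- main estimate
  have hkey : v ^ 2 ≤ C * ∫ t in α..s, F t := by
    have := hineq s hsβ
    rw [hfs] at this
    exact this
  have h2 : (∫ t in α..s, F t) ≤ (s - α) * ((β - α) * E v) := by
    have h3 : (∫ t in α..s, F t) ≤ ∫ _ in α..s, ((β - α) * E v) :=
      intervalIntegral.integral_mono_on hαs hFint intervalIntegrable_const hFle
    rw [intervalIntegral.integral_const, smul_eq_mul] at h3
    exact h3
  have hEv2 : v ^ 2 ≤ C * ((β - α) ^ 2 * E v) := by
    have h4 : (s - α) * ((β - α) * E v) ≤ (β - α) ^ 2 * E v := by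
      have hsα : 0 ≤ s - α := by linarith
      have hsβ' : s - α ≤ β - α := by linarith [hsβ.2]
      calc (s - α) * ((β - α) * E v) ≤ (β - α) * ((β - α) * E v) :=
            mul_le_mul_of_nonneg_right hsβ' (mul_nonneg hβα.le (hE0 v))
        _ = (β - α) ^ 2 * E v := by ring
    calc v ^ 2 ≤ C * ∫ t in α..s, F t := hkey
      _ ≤ C * ((s - α) * ((β - α) * E v)) := by
          exact mul_le_mul_of_nonneg_left h2 hC
      _ ≤ C * ((β - α) ^ 2 * E v) := mul_le_mul_of_nonneg_left h4 hC
  -- bound E v ≤ 27 v^3 / b^3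
  have hEvbound : E v ≤ 27 * v ^ 3 / b ^ 3 := by
    rw [hE v, if_pos hv0]
    have h5 : (b / v / 3) ^ 3 ≤ Real.exp (b / v) := cube_div_le_exp (by positivity)
    have h6 : -b / v = -(b / v) := by ring
    rw [h6, Real.exp_neg]
    have hpos : 0 < (b / v / 3) ^ 3 := by positivity
    have h7 : (Real.exp (b / v))⁻¹ ≤ ((b / v / 3) ^ 3)⁻¹ :=
      inv_anti₀ hpos h5
    refine h7.trans (le_of_eq ?_)
    field_simp
    ring
  -- final contradiction
  have hb3 : 0 < b ^ 3 := by positivity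
  have hfinal : v ^ 2 ≤ C * ((β - α) ^ 2 * (27 * v ^ 3 / b ^ 3)) := by
    refine hEv2.trans ?_
    have h8 : (β - α) ^ 2 * E v ≤ (β - α) ^ 2 * (27 * v ^ 3 / b ^ 3) :=
      mul_le_mul_of_nonneg_left hEvbound (by positivity)
    exact mul_le_mul_of_nonneg_left h8 hC
  have hmul : v ^ 2 * b ^ 3 ≤ 27 * C * (β - α) ^ 2 * v ^ 3 := by
    have h9 := mul_le_mul_of_nonneg_right hfinal hb3.le
    calc v ^ 2 * b ^ 3 ≤ C * ((β - α) ^ 2 * (27 * v ^ 3 / b ^ 3)) * b ^ 3 := h9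
      _ = 27 * C * (β - α) ^ 2 * v ^ 3 := by field_simp
  have h10 := mul_le_mul_of_nonneg_right hvb (sq_nonneg v)
  nlinarith [pow_pos hv0 3, sq_nonneg (β - α), mul_pos (pow_pos hβα 2) (pow_pos hv0 3)]
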